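/- The prior covariance decomposes as Γ_pr = Φᵣ Φᵣᵀ + Φ⊥ Φ⊥ᵀ, the complement projection of the prior covariance satisfies (I − Πᵣ) Γ_pr (I − Πᵣ)ᵀ = Φ⊥ Φ⊥ᵀ = Γ_pr − Φᵣ Φᵣᵀ, and consequently for every real r×r matrix Γ̃ one has Φᵣ Γ̃ Φᵣᵀ + (I − Πᵣ) Γ_pr (I − Πᵣ)ᵀ = Γ_pr + Φᵣ (Γ̃ − I_r) Φᵣᵀ; this is the reduced-variance estimator of the posterior covariance. -/

import Mathlib

open Matrix

/-- `Γ_pr = Φᵣ Φᵣᵀ + Φ⊥ Φ⊥ᵀ`,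
`(I − Πᵣ) Γ_pr (I − Πᵣ)ᵀ = Φ⊥ Φ⊥ᵀ = Γ_pr − Φᵣ Φᵣᵀ`, and for every `r×r` matrix
`Γ̃`, `Φᵣ Γ̃ Φᵣᵀ + (I − Πᵣ) Γ_pr (I − Πᵣ)ᵀ = Γ_pr + Φᵣ (Γ̃ − I_r) Φᵣᵀ` (the
reduced-variance estimator of the posterior covariance). -/
theorem stmt_18 {n r : ℕ} (hn : 1 ≤ n) (hr1 : 1 ≤ r) (hrn : r ≤ n)
    (Γpr L : Matrix (Fin n) (Fin n) ℝ)
    (hΓpr : Γpr.PosDef) (hL : IsUnit L.det) (hLL : Γpr = L * Lᵀ)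
    (Ψr : Matrix (Fin n) (Fin r) ℝ) (Ψp : Matrix (Fin n) (Fin (n - r)) ℝ)
    (hQ1 : (fromCols Ψr Ψp)ᵀ * fromCols Ψr Ψp = 1)
    (hQ2 : fromCols Ψr Ψp * (fromCols Ψr Ψp)ᵀ = 1)
    (Φr : Matrix (Fin n) (Fin r) ℝ) (hΦr : Φr = L * Ψr)
    (Φp : Matrix (Fin n) (Fin (n - r)) ℝ) (hΦp : Φp = L * Ψp)
    (Ξr : Matrix (Fin n) (Fin r) ℝ) (hΞr : Ξr = (Lᵀ)⁻¹ * Ψr)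
    (Ξp : Matrix (Fin n) (Fin (n - r)) ℝ) (hΞp : Ξp = (Lᵀ)⁻¹ * Ψp)
    (Pir : Matrix (Fin n) (Fin n) ℝ) (hPir : Pir = Φr * Ξrᵀ) :
    Γpr = Φr * Φrᵀ + Φp * Φpᵀ ∧
    (1 - Pir) * Γpr * (1 - Pir)ᵀ = Φp * Φpᵀ ∧
    (1 - Pir) * Γpr * (1 - Pir)ᵀ = Γpr - Φr * Φrᵀ ∧
    ∀ Γt : Matrix (Fin r) (Fin r) ℝ,
      Φr * Γt * Φrᵀ + (1 - Pir) * Γpr * (1 - Pir)ᵀ = Γpr + Φr * (Γt - 1) * Φrᵀ := by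
  have h1 : Ψr * Ψrᵀ + Ψp * Ψpᵀ = 1 := by
    rwa [transpose_fromCols, fromCols_mul_fromRows] at hQ2
  have h2 : fromBlocks (Ψrᵀ * Ψr) (Ψrᵀ * Ψp) (Ψpᵀ * Ψr) (Ψpᵀ * Ψp)
      = fromBlocks 1 0 0 1 := by
    rw [transpose_fromCols, fromRows_mul_fromCols] at hQ1
    rw [hQ1, ← fromBlocks_one]
  have hpp : Ψpᵀ * Ψp = 1 := congrArg Matrix.toBlocks₂₂ h2
  have hΞrT : Ξrᵀ = Ψrᵀ * L⁻¹ := by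
    rw [hΞr, transpose_mul, transpose_nonsing_inv, transpose_transpose]
  have key : (1 - Pir) * L = L * (Ψp * Ψpᵀ) := by
    have hsum : L * (Ψr * Ψrᵀ) + L * (Ψp * Ψpᵀ) = L := by
      rw [← mul_add, h1, mul_one]
    rw [sub_mul, one_mul, hPir, hΞrT, hΦr]
    have e1 : L * Ψr * (Ψrᵀ * L⁻¹) * L = L * (Ψr * Ψrᵀ) := by
      simp only [Matrix.mul_assoc, nonsing_inv_mul L hL, Matrix.mul_one]
    rw [e1]; exact sub_eq_of_eq_add' hsum.symm
  have hfirst : Γpr = Φr * Φrᵀ + Φp * Φpᵀ := by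
    have e : L * Lᵀ = L * ((Ψr * Ψrᵀ + Ψp * Ψpᵀ) * Lᵀ) := by rw [h1, one_mul]
    rw [hLL, hΦr, hΦp, e, Matrix.add_mul, Matrix.mul_add]
    simp only [transpose_mul, Matrix.mul_assoc]
  have hsecond : (1 - Pir) * Γpr * (1 - Pir)ᵀ = Φp * Φpᵀ := by
    have hT : Lᵀ * (1 - Pir)ᵀ = (Ψp * Ψpᵀ)ᵀ * Lᵀ := by
      rw [← transpose_mul, key, transpose_mul]
    calc (1 - Pir) * Γpr * (1 - Pir)ᵀ
        = ((1 - Pir) * L) * (Lᵀ * (1 - Pir)ᵀ) := by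
          rw [hLL]; simp only [Matrix.mul_assoc]
      _ = Φp * Φpᵀ := by
          rw [key, hT, transpose_mul, transpose_transpose, hΦp, transpose_mul]
          simp only [Matrix.mul_assoc]
          rw [show Ψpᵀ * (Ψp * (Ψpᵀ * Lᵀ)) = Ψpᵀ * Lᵀ from by
            rw [← Matrix.mul_assoc, hpp, Matrix.one_mul]]
  refine ⟨hfirst, hsecond, ?_, ?_⟩
  · rw [hsecond, hfirst]; abel
  · intro Γt
    rw [hsecond]
    have e : Φp * Φpᵀ = Γpr - Φr * Φrᵀ := by rw [hfirst]; abel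
    rw [e, Matrix.mul_sub, Matrix.mul_one, Matrix.sub_mul]
    abel
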